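/- Let f0, f1 be the automatic transformations of the Mealy automaton A₄, with products written so that (f g)(u) = f(g(u)). Then the following equalities of transformations of infinite words over Fin 4 hold: f0² f0 = f0² f1 = f0²; f1 f0 f1² f0 = f1 f0 f0 and f1 f0 f1² f1 = f1 f0 f1; and for every integer p ≥ 1, f0 f1^(2p+1) f0 = f0 f1 f0. -/
import Mathlib


/-- The sequence of states visited by a Mealy automaton with transition function `tr`,
started at state `q`, while reading the infinite word `u`. -/
def stateSeq {X Q : Type*} (tr : X → Q → Q) (q : Q) (u : ℕ → X) : ℕ → Q
  | 0 => q
  | k + 1 => tr (u k) (stateSeq tr q u k)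

/-- The automatic transformation of infinite words defined by the Mealy automaton with
transition function `tr` and output function `out` at the state `q`. -/
def autTrans {X Q : Type*} (tr : X → Q → Q) (out : X → Q → X) (q : Q) (u : ℕ → X) : ℕ → X :=
  fun n => out (u n) (stateSeq tr q u n)

/-- The transformation given by a word of states: the product (composition, applied from
right to left) of the corresponding automatic transformations. -/
def wordTrans {X Q : Type*} (tr : X → Q → Q) (out : X → Q → X) (w : List Q) :
    (ℕ → X) → (ℕ → X) :=
  (w.map (autTrans tr out)).foldr (· ∘ ·) id

/-- The growth function of a Mealy automaton: `growth tr out n` is the number of distinct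
transformations of infinite words obtained as compositions of exactly `n` automatic
transformations of the automaton. -/
noncomputable def growth {X Q : Type*} (tr : X → Q → Q) (out : X → Q → X) (n : ℕ) : ℕ :=
  Set.ncard { g : (ℕ → X) → (ℕ → X) | ∃ w : List Q, w.length = n ∧ wordTrans tr out w = g }

/-- The `i`-th finite difference of a function `γ`. -/
def fdiff (γ : ℕ → ℤ) : ℕ → ℕ → ℤ
  | 0, n => γ n
  | i + 1, n => fdiff γ i n - fdiff γ i (n - 1)

/-- Output function of the automaton `A₄`: at `q0` the outputs of `(x0,x1,x2,x3)` are
`(x0,x0,x1,x1)`; at `q1` they are `(x2,x3,x0,x1)`. -/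
def a4Out : Fin 4 → Fin 2 → Fin 4 := fun x q =>
  if q = 0 then (if x = 0 then 0 else if x = 1 then 0 else 1)
  else (if x = 0 then 2 else if x = 1 then 3 else if x = 2 then 0 else 1)

/-- Transition function of the automaton `A₄`: all transitions from `q0` stay at `q0`;
from `q1` the transition goes to `q0` on reading `x0` and stays at `q1` otherwise. -/
def a4Tr : Fin 4 → Fin 2 → Fin 2 := fun x q =>
  if q = 0 then 0 else (if x = 0 then 0 else 1)

/-- The automatic transformations `f0, f1` of the automaton `A₄` at states `q0, q1`. -/
def a4F (q : Fin 2) : (ℕ → Fin 4) → (ℕ → Fin 4) := autTrans a4Tr a4Out q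

/- ### Auxiliary lemmas -/

lemma a4F_apply (q : Fin 2) (u : ℕ → Fin 4) (n : ℕ) :
    a4F q u n = a4Out (u n) (stateSeq a4Tr q u n) := rfl

lemma state0 (u : ℕ → Fin 4) (n : ℕ) : stateSeq a4Tr 0 u n = 0 := by
  induction n with
  | zero => rfl
  | succ n ih =>
    show a4Tr (u n) (stateSeq a4Tr 0 u n) = 0
    rw [ih]; rfl

lemma s_one (u : ℕ → Fin 4) (n : ℕ) (h : ∀ k < n, u k ≠ 0) :
    stateSeq a4Tr 1 u n = 1 := by
  induction n with
  | zero => rfl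
  | succ n ih =>
    show a4Tr (u n) (stateSeq a4Tr 1 u n) = 1
    rw [ih (fun k hk => h k (Nat.lt_succ_of_lt hk))]
    unfold a4Tr
    rw [if_neg (by decide : ¬(1:Fin 2) = 0), if_neg (h n (Nat.lt_succ_self n))]

lemma s_zero (u : ℕ → Fin 4) (k n : ℕ) (hk : u k = 0) (h : k < n) :
    stateSeq a4Tr 1 u n = 0 := by
  induction n with
  | zero => omega
  | succ n ih =>
    show a4Tr (u n) (stateSeq a4Tr 1 u n) = 0
    rcases Nat.lt_succ_iff_lt_or_eq.mp h with h' | h'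
    · rw [ih h']; rfl
    · subst h'
      rw [hk]
      simp [a4Tr]

lemma f0_apply (u : ℕ → Fin 4) (n : ℕ) : a4F 0 u n = a4Out (u n) 0 := by
  rw [a4F_apply, state0]

lemma f0_binary (u : ℕ → Fin 4) (n : ℕ) : a4F 0 u n = 0 ∨ a4F 0 u n = 1 := by
  rw [f0_apply]
  exact (by decide : ∀ x : Fin 4, a4Out x 0 = 0 ∨ a4Out x 0 = 1) (u n)

lemma f0_eq_one_iff (u : ℕ → Fin 4) (n : ℕ) :
    a4F 0 u n = 1 ↔ (u n = 2 ∨ u n = 3) := by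
  rw [f0_apply]
  exact (by decide : ∀ x : Fin 4, (a4Out x 0 = 1 ↔ (x = 2 ∨ x = 3))) (u n)

lemma lem00 (u : ℕ → Fin 4) (n : ℕ) : a4F 0 (a4F 0 u) n = 0 := by
  rw [f0_apply, f0_apply]
  exact (by decide : ∀ x : Fin 4, a4Out (a4Out x 0) 0 = 0) (u n)

/-- Key lemma: `f1` applied to two binary words with the same maximal all-ones prefixes
gives the same result. -/
lemma key (b c : ℕ → Fin 4) (hb : ∀ n, b n = 0 ∨ b n = 1) (hc : ∀ n, c n = 0 ∨ c n = 1)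
    (H : ∀ n, (∀ k ≤ n, b k = 1) ↔ (∀ k ≤ n, c k = 1)) : a4F 1 b = a4F 1 c := by
  have Hlt : ∀ n, (∀ k < n, b k = 1) ↔ (∀ k < n, c k = 1) := by
    intro n
    cases n with
    | zero => simp
    | succ n => simpa [Nat.lt_succ_iff] using H n
  funext n
  rw [a4F_apply, a4F_apply]
  by_cases hp : ∀ k < n, b k = 1
  · have hpc : ∀ k < n, c k = 1 := (Hlt n).mp hp
    have sb : stateSeq a4Tr 1 b n = 1 :=
      s_one _ _ (fun k hk => by rw [hp k hk]; decide)
    have sc : stateSeq a4Tr 1 c n = 1 :=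
      s_one _ _ (fun k hk => by rw [hpc k hk]; decide)
    rw [sb, sc]
    by_cases hbn : b n = 1
    · have hall : ∀ k ≤ n, b k = 1 := by
        intro k hk
        rcases Nat.lt_or_ge k n with h' | h'
        · exact hp k h'
        · have : k = n := le_antisymm hk h'
          rw [this]; exact hbn
      have : c n = 1 := ((H n).mp hall) n le_rfl
      rw [hbn, this]
    · have hbn0 : b n = 0 := (hb n).resolve_right hbn
      have hcn0 : c n = 0 := by
        rcases hc n with h' | h'
        · exact h'
        · exfalso
          apply hbn
          have hall : ∀ k ≤ n, c k = 1 := by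
            intro k hk
            rcases Nat.lt_or_ge k n with h'' | h''
            · exact hpc k h''
            · have : k = n := le_antisymm hk h''
              rw [this]; exact h'
          exact ((H n).mpr hall) n le_rfl
      rw [hbn0, hcn0]
  · have hpc : ¬ ∀ k < n, c k = 1 := fun hh => hp ((Hlt n).mpr hh)
    push_neg at hp hpc
    obtain ⟨k, hk, hk1⟩ := hp
    obtain ⟨j, hj, hj1⟩ := hpc
    have sb : stateSeq a4Tr 1 b n = 0 := s_zero _ k _ ((hb k).resolve_right hk1) hk
    have sc : stateSeq a4Tr 1 c n = 0 := s_zero _ j _ ((hc j).resolve_right hj1) hj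
    rw [sb, sc]
    rcases hb n with h' | h' <;> rcases hc n with h'' | h'' <;> rw [h', h''] <;> decide

/-- Characterization of the all-`{2,3}` prefixes of `f1 w`. -/
lemma L1 (w : ℕ → Fin 4) (n : ℕ) :
    (∀ k ≤ n, a4F 1 w k = 2 ∨ a4F 1 w k = 3) ↔
      ((∀ j < n, w j = 1) ∧ (w n = 0 ∨ w n = 1)) := by
  have d1 : ∀ x : Fin 4, ¬(a4Out x 0 = 2 ∨ a4Out x 0 = 3) := by decide
  have d2 : ∀ x : Fin 4, (a4Out x 1 = 2 ∨ a4Out x 1 = 3) → (x = 0 ∨ x = 1) := by decide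
  constructor
  · intro h
    have hpre : ∀ j, j < n → w j = 1 := by
      intro j
      induction j using Nat.strong_induction_on with
      | _ j ih =>
        intro hj
        have hst : stateSeq a4Tr 1 w j = 1 :=
          s_one _ _ (fun k hk => by rw [ih k hk (lt_trans hk hj)]; decide)
        have hj' := h j (le_of_lt hj)
        rw [a4F_apply, hst] at hj'
        rcases d2 _ hj' with h0 | h1
        · exfalso
          have hz : stateSeq a4Tr 1 w (j+1) = 0 := s_zero _ j _ h0 (Nat.lt_succ_self j)
          have hjj := h (j+1) hj
          rw [a4F_apply, hz] at hjj
          exact d1 _ hjj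
        · exact h1
    have hst : stateSeq a4Tr 1 w n = 1 :=
      s_one _ _ (fun k hk => by rw [hpre k hk]; decide)
    have hn := h n le_rfl
    rw [a4F_apply, hst] at hn
    exact ⟨hpre, d2 _ hn⟩
  · rintro ⟨h1, h2⟩
    intro k hk
    have hst : stateSeq a4Tr 1 w k = 1 :=
      s_one _ _ (fun j hj => by rw [h1 j (lt_of_lt_of_le hj hk)]; decide)
    rw [a4F_apply, hst]
    rcases lt_or_eq_of_le hk with hlt | heq
    · rw [h1 k hlt]; decide
    · rw [heq]; rcases h2 with h' | h' <;> rw [h'] <;> decide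

/-- Generic prefix-transport lemma for `f1`. -/
lemma L_gen (w : ℕ → Fin 4) (n : ℕ) (c s1 s2 : Fin 4) (hc : c ≠ 0) :
    ((∀ j < n, a4F 1 w j = a4Out c 1) ∧
      (a4F 1 w n = a4Out s1 1 ∨ a4F 1 w n = a4Out s2 1))
    ↔ ((∀ j < n, w j = c) ∧ (w n = s1 ∨ w n = s2)) := by
  have inj : ∀ a b : Fin 4, a4Out a 1 = a4Out b 1 → a = b := by decide
  constructor
  · rintro ⟨h1, h2⟩
    have hpre : ∀ j, j < n → w j = c := by
      intro j
      induction j using Nat.strong_induction_on with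
      | _ j ih =>
        intro hj
        have hst : stateSeq a4Tr 1 w j = 1 :=
          s_one _ _ (fun k hk => by rw [ih k hk (lt_trans hk hj)]; exact hc)
        have := h1 j hj
        rw [a4F_apply, hst] at this
        exact inj _ _ this
    refine ⟨hpre, ?_⟩
    have hst : stateSeq a4Tr 1 w n = 1 :=
      s_one _ _ (fun k hk => by rw [hpre k hk]; exact hc)
    rcases h2 with h | h <;> rw [a4F_apply, hst] at h
    · exact Or.inl (inj _ _ h)
    · exact Or.inr (inj _ _ h)
  · rintro ⟨h1, h2⟩
    have hst : ∀ k, k ≤ n → stateSeq a4Tr 1 w k = 1 := fun k hk =>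
      s_one _ _ (fun j hj => by rw [h1 j (lt_of_lt_of_le hj hk)]; exact hc)
    constructor
    · intro j hj
      rw [a4F_apply, hst j (le_of_lt hj), h1 j hj]
    · rcases h2 with h | h
      · exact Or.inl (by rw [a4F_apply, hst n le_rfl, h])
      · exact Or.inr (by rw [a4F_apply, hst n le_rfl, h])

/- ### Pattern words for relation 5 -/

/-- The word `3^m 2 1^j 0^∞`. -/
def pat (m j : ℕ) : ℕ → Fin 4 := fun n =>
  if n < m then 3 else if n = m then 2 else if n ≤ m + j then 1 else 0

/-- The word `1^m 0 3^j 2 0^∞`. -/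
def pat2 (m j : ℕ) : ℕ → Fin 4 := fun n =>
  if n < m then 1 else if n = m then 0 else if n ≤ m + j then 3
  else if n = m + j + 1 then 2 else 0

lemma P1 (v : ℕ → Fin 4) (m : ℕ) (hb : ∀ n, v n = 0 ∨ v n = 1)
    (h1 : ∀ k < m, v k = 1) (h0 : v m = 0) : a4F 1 v = pat m 0 := by
  funext n
  rcases lt_trichotomy n m with h | h | h
  · have hst : stateSeq a4Tr 1 v n = 1 :=
      s_one _ _ (fun k hk => by rw [h1 k (lt_trans hk h)]; decide)
    rw [a4F_apply, hst, h1 n h, show pat m 0 n = 3 by unfold pat; split_ifs <;> first | rfl | omega]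
    decide
  · subst h
    have hst : stateSeq a4Tr 1 v n = 1 :=
      s_one _ _ (fun k hk => by rw [h1 k hk]; decide)
    rw [a4F_apply, hst, h0, show pat n 0 n = 2 by unfold pat; split_ifs <;> first | rfl | omega]
    decide
  · have hst : stateSeq a4Tr 1 v n = 0 := s_zero _ m _ h0 h
    rw [a4F_apply, hst, show pat m 0 n = 0 by unfold pat; split_ifs <;> first | rfl | omega]
    rcases hb n with h' | h' <;> rw [h'] <;> decide

lemma P2 (m j : ℕ) : a4F 1 (pat m j) = pat2 m j := by
  have hne : ∀ k, k ≤ m + j → pat m j k ≠ 0 := by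
    intro k hk; unfold pat; split_ifs <;> first | decide | omega
  funext n
  rcases le_or_gt n (m + j + 1) with h | h
  · have hst : stateSeq a4Tr 1 (pat m j) n = 1 :=
      s_one _ _ (fun k hk => hne k (by omega))
    rw [a4F_apply, hst]
    rcases lt_trichotomy n m with h1 | h1 | h1
    · rw [show pat m j n = 3 by unfold pat; split_ifs <;> first | rfl | omega,
        show pat2 m j n = 1 by unfold pat2; split_ifs <;> first | rfl | omega]
      decide
    · rw [show pat m j n = 2 by unfold pat; split_ifs <;> first | rfl | omega,
        show pat2 m j n = 0 by unfold pat2; split_ifs <;> first | rfl | omega]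
      decide
    · rcases (by omega : n ≤ m + j ∨ n = m + j + 1) with h2 | h2
      · rw [show pat m j n = 1 by unfold pat; split_ifs <;> first | rfl | omega,
          show pat2 m j n = 3 by unfold pat2; split_ifs <;> first | rfl | omega]
        decide
      · rw [show pat m j n = 0 by unfold pat; split_ifs <;> first | rfl | omega,
          show pat2 m j n = 2 by unfold pat2; split_ifs <;> first | rfl | omega]
        decide
  · have hz : pat m j (m + j + 1) = 0 := by unfold pat; split_ifs <;> first | rfl | omega
    have hst : stateSeq a4Tr 1 (pat m j) n = 0 := s_zero _ (m + j + 1) _ hz h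
    rw [a4F_apply, hst,
      show pat m j n = 0 by unfold pat; split_ifs <;> first | rfl | omega,
      show pat2 m j n = 0 by unfold pat2; split_ifs <;> first | rfl | omega]
    decide

lemma P3 (m j : ℕ) : a4F 1 (pat2 m j) = pat m (j + 1) := by
  have hne : ∀ k, k < m → pat2 m j k ≠ 0 := by
    intro k hk; unfold pat2; split_ifs <;> first | decide | omega
  funext n
  rcases lt_trichotomy n m with h | h | h
  · have hst : stateSeq a4Tr 1 (pat2 m j) n = 1 :=
      s_one _ _ (fun k hk => hne k (by omega))
    rw [a4F_apply, hst,
      show pat2 m j n = 1 by unfold pat2; split_ifs <;> first | rfl | omega,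
      show pat m (j+1) n = 3 by unfold pat; split_ifs <;> first | rfl | omega]
    decide
  · have hst : stateSeq a4Tr 1 (pat2 m j) n = 1 :=
      s_one _ _ (fun k hk => hne k (by omega))
    rw [a4F_apply, hst,
      show pat2 m j n = 0 by unfold pat2; split_ifs <;> first | rfl | omega,
      show pat m (j+1) n = 2 by unfold pat; split_ifs <;> first | rfl | omega]
    decide
  · have hz : pat2 m j m = 0 := by unfold pat2; split_ifs <;> first | rfl | omega
    have hst : stateSeq a4Tr 1 (pat2 m j) n = 0 := s_zero _ m _ hz h
    rw [a4F_apply, hst]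
    rcases (by omega : n ≤ m + j ∨ n = m + j + 1 ∨ m + j + 1 < n) with h2 | h2 | h2
    · rw [show pat2 m j n = 3 by unfold pat2; split_ifs <;> first | rfl | omega,
        show pat m (j+1) n = 1 by unfold pat; split_ifs <;> first | rfl | omega]
      decide
    · rw [show pat2 m j n = 2 by unfold pat2; split_ifs <;> first | rfl | omega,
        show pat m (j+1) n = 1 by unfold pat; split_ifs <;> first | rfl | omega]
      decide
    · rw [show pat2 m j n = 0 by unfold pat2; split_ifs <;> first | rfl | omega,
        show pat m (j+1) n = 0 by unfold pat; split_ifs <;> first | rfl | omega]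
      decide

lemma g0pat (m p n : ℕ) : a4Out (pat m p n) 0 = a4Out (pat m 0 n) 0 := by
  unfold pat; split_ifs <;> first | rfl | omega | decide

lemma iter_pat (v : ℕ → Fin 4) (m : ℕ) (hb : ∀ n, v n = 0 ∨ v n = 1)
    (h1 : ∀ k < m, v k = 1) (h0 : v m = 0) :
    ∀ p, (a4F 1)^[2 * p + 1] v = pat m p := by
  intro p
  induction p with
  | zero =>
    show (a4F 1)^[1] v = pat m 0
    rw [Function.iterate_one]
    exact P1 v m hb h1 h0
  | succ p ih =>
    have h2 : 2 * (p + 1) + 1 = (2 * p + 1) + 1 + 1 := by ring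
    rw [h2, Function.iterate_succ_apply', Function.iterate_succ_apply', ih, P2, P3]

lemma ones_f1 (w : ℕ → Fin 4) (h : ∀ n, w n = 1) : a4F 1 w = fun _ => 3 := by
  funext n
  have hst : stateSeq a4Tr 1 w n = 1 :=
    s_one _ _ (fun k _ => by rw [h k]; decide)
  rw [a4F_apply, hst, h n]
  rfl

lemma threes_f1 : a4F 1 (fun _ => (3 : Fin 4)) = fun _ => (1 : Fin 4) := by
  funext n
  have hst : stateSeq a4Tr 1 (fun _ => (3 : Fin 4)) n = 1 :=
    s_one _ _ (fun k _ => by decide)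
  rw [a4F_apply, hst]
  rfl

lemma iter_ones (v : ℕ → Fin 4) (h : ∀ n, v n = 1) :
    ∀ p, (a4F 1)^[2 * p + 1] v = fun _ => 3 := by
  intro p
  induction p with
  | zero =>
    show (a4F 1)^[1] v = fun _ => 3
    rw [Function.iterate_one]
    exact ones_f1 v h
  | succ p ih =>
    have h2 : 2 * (p + 1) + 1 = (2 * p + 1) + 1 + 1 := by ring
    rw [h2, Function.iterate_succ_apply', Function.iterate_succ_apply', ih, threes_f1]
    exact ones_f1 _ (fun n => rfl)

/-- The defining relations of the semigroup `S_{A₄}` hold among the automatic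
transformations `f0, f1` of `A₄` (products composed from right to left). -/
theorem relations_a4 :
    a4F 0 ∘ a4F 0 ∘ a4F 0 = a4F 0 ∘ a4F 0 ∧
    a4F 0 ∘ a4F 0 ∘ a4F 1 = a4F 0 ∘ a4F 0 ∧
    a4F 1 ∘ a4F 0 ∘ a4F 1 ∘ a4F 1 ∘ a4F 0 = a4F 1 ∘ a4F 0 ∘ a4F 0 ∧
    a4F 1 ∘ a4F 0 ∘ a4F 1 ∘ a4F 1 ∘ a4F 1 = a4F 1 ∘ a4F 0 ∘ a4F 1 ∧
    ∀ p : ℕ, 1 ≤ p → a4F 0 ∘ (a4F 1)^[2 * p + 1] ∘ a4F 0 = a4F 0 ∘ a4F 1 ∘ a4F 0 := by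
  refine ⟨?_, ?_, ?_, ?_, ?_⟩
  · funext u n
    show a4F 0 (a4F 0 (a4F 0 u)) n = a4F 0 (a4F 0 u) n
    rw [lem00, lem00]
  · funext u n
    show a4F 0 (a4F 0 (a4F 1 u)) n = a4F 0 (a4F 0 u) n
    rw [lem00, lem00]
  · funext u
    show a4F 1 (a4F 0 (a4F 1 (a4F 1 (a4F 0 u)))) = a4F 1 (a4F 0 (a4F 0 u))
    apply key _ _ (f0_binary _) (f0_binary _)
    intro n
    refine iff_of_false ?_ ?_
    · intro h
      have h' : ∀ k ≤ n, a4F 1 (a4F 1 (a4F 0 u)) k = 2 ∨ a4F 1 (a4F 1 (a4F 0 u)) k = 3 :=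
        fun k hk => (f0_eq_one_iff _ k).mp (h k hk)
      rw [L1] at h'
      have l2 := (L_gen (a4F 0 u) n 3 2 3 (by decide)).mp
        (by rw [show a4Out (3:Fin 4) 1 = 1 from rfl, show a4Out (2:Fin 4) 1 = 0 from rfl]
            exact h')
      rcases f0_binary u n with h0 | h0 <;> rcases l2.2 with h2 | h2 <;>
        rw [h0] at h2 <;> exact absurd h2 (by decide)
    · intro h
      have := h n le_rfl
      rw [lem00] at this
      exact absurd this (by decide)
  · funext u
    show a4F 1 (a4F 0 (a4F 1 (a4F 1 (a4F 1 u)))) = a4F 1 (a4F 0 (a4F 1 u))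
    apply key _ _ (f0_binary _) (f0_binary _)
    intro n
    have e1 : ∀ (z : ℕ → Fin 4),
        (∀ k ≤ n, a4F 0 z k = 1) ↔ (∀ k ≤ n, z k = 2 ∨ z k = 3) :=
      fun z => forall₂_congr (fun k _ => f0_eq_one_iff z k)
    rw [e1, e1, L1, L1]
    have l2 := L_gen (a4F 1 u) n 3 2 3 (by decide)
    have l3 := L_gen u n 1 0 1 (by decide)
    rw [show a4Out (3:Fin 4) 1 = 1 from rfl, show a4Out (2:Fin 4) 1 = 0 from rfl] at l2
    rw [show a4Out (1:Fin 4) 1 = 3 from rfl, show a4Out (0:Fin 4) 1 = 2 from rfl] at l3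
    rw [l2, l3]
  · intro p _
    funext u n
    show a4F 0 ((a4F 1)^[2 * p + 1] (a4F 0 u)) n = a4F 0 (a4F 1 (a4F 0 u)) n
    by_cases h : ∃ k, a4F 0 u k = 0
    · set m := Nat.find h with hm
      have h0 : a4F 0 u m = 0 := Nat.find_spec h
      have h1 : ∀ k < m, a4F 0 u k = 1 :=
        fun k hk => (f0_binary u k).resolve_left (Nat.find_min h hk)
      rw [iter_pat (a4F 0 u) m (f0_binary u) h1 h0 p,
        P1 (a4F 0 u) m (f0_binary u) h1 h0, f0_apply, f0_apply]
      exact g0pat m p n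
    · push_neg at h
      have h1 : ∀ k, a4F 0 u k = 1 := fun k => (f0_binary u k).resolve_left (h k)
      rw [iter_ones (a4F 0 u) h1 p, ones_f1 (a4F 0 u) h1]
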